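/- Let V be a finite-dimensional real vector space equipped with a nondegenerate alternating bilinear form ω, an inner product g, and a linear map J : V → V with J² = −id such that g(Jx,Jy) = g(x,y) and ω(x,y) = g(x,Jy) for all x,y ∈ V. Let L ⊆ V be a subspace and set L¹ := L ∩ L^ω, L² := the g-orthogonal complement of L¹ inside L, E¹ := J(L¹), and E² := (L + E¹)^ω. If J(L²) ⊆ L², then E² is g-orthogonal to L², and J(E²) ⊆ E². -/

import Mathlib

noncomputable section

variable {V : Type*} [AddCommGroup V] [Module ℝ V]

/-- The `ω`-orthogonal complement `L^ω = {v ∈ V : ω(v,w) = 0 for all w ∈ L}`. -/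
def symplCompl (ω : V →ₗ[ℝ] V →ₗ[ℝ] ℝ) (L : Submodule ℝ V) : Submodule ℝ V where
  carrier := {v | ∀ w ∈ L, ω v w = 0}
  zero_mem' := by intro w hw; simp
  add_mem' := by
    intro x y hx hy w hw
    rw [map_add, LinearMap.add_apply, hx w hw, hy w hw, add_zero]
  smul_mem' := by
    intro c x hx w hw
    rw [map_smul, LinearMap.smul_apply, hx w hw, smul_zero]

/-- The g-orthogonal complement of a subspace. -/
def orthCompl (g : V →ₗ[ℝ] V →ₗ[ℝ] ℝ) (L : Submodule ℝ V) : Submodule ℝ V where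
  carrier := {v | ∀ w ∈ L, g v w = 0}
  zero_mem' := by intro w hw; simp
  add_mem' := by
    intro x y hx hy w hw
    rw [map_add, LinearMap.add_apply, hx w hw, hy w hw, add_zero]
  smul_mem' := by
    intro c x hx w hw
    rw [map_smul, LinearMap.smul_apply, hx w hw, smul_zero]

/-- With the decomposition data of a compatible triple `(ω, J, g)` on `V`
and a subspace `L`, if `J(L²) ⊆ L²` then `E²` is `g`-orthogonal to `L²` and
`J(E²) ⊆ E²`. -/
theorem stmt4 [FiniteDimensional ℝ V]
    (ω : V →ₗ[ℝ] V →ₗ[ℝ] ℝ) (hω_alt : ∀ v, ω v v = 0)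
    (hω_nondeg : ∀ v, (∀ w, ω v w = 0) → v = 0)
    (g : V →ₗ[ℝ] V →ₗ[ℝ] ℝ) (hg_symm : ∀ x y, g x y = g y x)
    (hg_posdef : ∀ x, x ≠ 0 → 0 < g x x)
    (J : V →ₗ[ℝ] V) (hJ : ∀ v, J (J v) = -v)
    (hJg : ∀ x y, g (J x) (J y) = g x y)
    (hωg : ∀ x y, ω x y = g x (J y))
    (L : Submodule ℝ V)
    (L1 : Submodule ℝ V) (hL1 : L1 = L ⊓ symplCompl ω L)
    (L2 : Submodule ℝ V) (hL2 : L2 = L ⊓ orthCompl g L1)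
    (E1 : Submodule ℝ V) (hE1 : E1 = L1.map J)
    (E2 : Submodule ℝ V) (hE2 : E2 = symplCompl ω (L ⊔ E1))
    (hJL2 : ∀ v ∈ L2, J v ∈ L2) :
    (∀ x ∈ E2, ∀ y ∈ L2, g x y = 0) ∧ (∀ x ∈ E2, J x ∈ E2) := by
  -- membership lemmas
  have hE2mem : ∀ x, x ∈ E2 ↔ ∀ w ∈ L ⊔ E1, ω x w = 0 := by
    intro x; rw [hE2]; exact Iff.rfl
  have hL1L : L1 ≤ L := by rw [hL1]; exact inf_le_left
  have hL2L : L2 ≤ L := by rw [hL2]; exact inf_le_left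
  -- Part 1
  have part1 : ∀ x ∈ E2, ∀ y ∈ L2, g x y = 0 := by
    intro x hx y hy
    have hJy : J y ∈ L := hL2L (hJL2 y hy)
    have h0 : ω x (J y) = 0 := (hE2mem x).1 hx _ (Submodule.mem_sup_left hJy)
    rw [hωg, hJ, map_neg] at h0
    linarith
  refine ⟨part1, ?_⟩
  -- g x w = 0 for w ∈ L1
  have hgL1 : ∀ x ∈ E2, ∀ w ∈ L1, g x w = 0 := by
    intro x hx w hw
    have hJw : J w ∈ E1 := by rw [hE1]; exact Submodule.mem_map_of_mem hw
    have h0 : ω x (J w) = 0 := (hE2mem x).1 hx _ (Submodule.mem_sup_right hJw)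
    rw [hωg, hJ, map_neg] at h0
    linarith
  -- decomposition L ≤ L1 ⊔ L2
  have hrefl : (g : LinearMap.BilinForm ℝ V).IsRefl := by
    intro a b h; rw [hg_symm]; exact h
  have hnd : (LinearMap.BilinForm.restrict (g : LinearMap.BilinForm ℝ V) L1).Nondegenerate := by
    refine (LinearMap.IsRefl.nondegenerate_iff_separatingLeft (B := LinearMap.BilinForm.restrict (g : LinearMap.BilinForm ℝ V) L1) (fun x y h => hrefl x y h)).2 ?_
    intro ⟨a, ha⟩ h
    have := h ⟨a, ha⟩
    simp only [LinearMap.BilinForm.restrict_apply, LinearMap.domRestrict_apply] at this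
    by_contra hne
    have : a ≠ 0 := by simpa using hne
    exact absurd ‹g a a = 0› (ne_of_gt (hg_posdef a this))
  have hcompl := LinearMap.BilinForm.isCompl_orthogonal_of_restrict_nondegenerate
    (B := (g : LinearMap.BilinForm ℝ V)) (W := L1) hrefl hnd
  have hgL : ∀ x ∈ E2, ∀ w ∈ L, g x w = 0 := by
    intro x hx w hw
    have : w ∈ L1 ⊔ LinearMap.BilinForm.orthogonal (g : LinearMap.BilinForm ℝ V) L1 := by
      rw [hcompl.sup_eq_top]; trivial
    obtain ⟨a, ha, b, hb, rfl⟩ := Submodule.mem_sup.1 this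
    have hbL : b ∈ L := by
      have : (a + b) - a ∈ L := Submodule.sub_mem _ hw (hL1L ha)
      simpa using this
    have hbL2 : b ∈ L2 := by
      rw [hL2]
      refine ⟨hbL, fun n hn => ?_⟩
      rw [hg_symm]
      exact hb n hn
    rw [map_add]
    rw [hgL1 x hx a ha, part1 x hx b hbL2, add_zero]
  have hgE1 : ∀ x ∈ E2, ∀ w ∈ E1, g x w = 0 := by
    intro x hx w hw
    rw [hE1] at hw
    obtain ⟨w', hw', rfl⟩ := hw
    have := (hE2mem x).1 hx w' (Submodule.mem_sup_left (hL1L hw'))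
    rw [hωg] at this
    exact this
  intro x hx
  rw [hE2mem]
  intro w hw
  obtain ⟨a, ha, b, hb, rfl⟩ := Submodule.mem_sup.1 hw
  have key : ∀ u, ω (J x) u = g x u := by
    intro u
    rw [hωg, hJg]
  rw [map_add, key, key, hgL x hx a ha, hgE1 x hx b hb, add_zero]
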